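/- Let k > 0 be a real number that is not an integer multiple of π, and let ω : ℤ → ℕ satisfy ω_n ≥ 1 for all n. Suppose that for each n ∈ ℤ and each j with 1 ≤ j ≤ ω_n there is a twice differentiable function u_{n,j} : ℝ → ℝ with u_{n,j}''(x) = −k²·u_{n,j}(x) for all x ∈ [n, n+1], that there is a function a : ℤ → ℝ with u_{n,j}(n) = a(n) and u_{n,j}(n+1) = a(n+1) for all such n, j (continuity at the vertices), and that Kirchhoff's condition holds at every vertex: Σ_{j=1}^{ω_n} u'_{n,j}(n) = Σ_{j=1}^{ω_{n−1}} u'_{n−1,j}(n) for every n ∈ ℤ. Then the vertex values satisfy the difference equation ω_n·a(n+1) + ω_{n−1}·a(n−1) − (ω_n + ω_{n−1})·cos(k)·a(n) = 0 for every n ∈ ℤ. -/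

import Mathlib

open Real Set

lemma edge_sol (k : ℝ) (hk : k ≠ 0) (c : ℝ) (u u' : ℝ → ℝ)
    (h1 : ∀ x ∈ Icc c (c+1), HasDerivWithinAt u (u' x) (Icc c (c+1)) x)
    (h2 : ∀ x ∈ Icc c (c+1), HasDerivWithinAt u' (-(k^2) * u x) (Icc c (c+1)) x) :
    u (c+1) = u c * Real.cos k + u' c / k * Real.sin k ∧
    u' (c+1) = -(k * u c * Real.sin k) + u' c * Real.cos k := by
  set s := Icc c (c+1) with hs
  set F : ℝ → ℝ := fun x => u x * Real.cos (k*(x-c)) - u' x / k * Real.sin (k*(x-c)) with hF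
  set G : ℝ → ℝ := fun x => u x * Real.sin (k*(x-c)) + u' x / k * Real.cos (k*(x-c)) with hG
  have hθ : ∀ x : ℝ, HasDerivAt (fun x => k*(x-c)) k x := by
    intro x
    simpa using ((hasDerivAt_id x).sub_const c).const_mul k
  have hFd : ∀ x ∈ s, HasDerivWithinAt F 0 s x := by
    intro x hx
    have hcos : HasDerivAt (fun x => Real.cos (k*(x-c))) (-Real.sin (k*(x-c)) * k) x :=
      (Real.hasDerivAt_cos _).comp x (hθ x)
    have hsin : HasDerivAt (fun x => Real.sin (k*(x-c))) (Real.cos (k*(x-c)) * k) x :=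
      (Real.hasDerivAt_sin _).comp x (hθ x)
    have := ((h1 x hx).mul hcos.hasDerivWithinAt).sub
      (((h2 x hx).div_const k).mul hsin.hasDerivWithinAt)
    refine this.congr_deriv ?_
    field_simp
    ring
  have hGd : ∀ x ∈ s, HasDerivWithinAt G 0 s x := by
    intro x hx
    have hcos : HasDerivAt (fun x => Real.cos (k*(x-c))) (-Real.sin (k*(x-c)) * k) x :=
      (Real.hasDerivAt_cos _).comp x (hθ x)
    have hsin : HasDerivAt (fun x => Real.sin (k*(x-c))) (Real.cos (k*(x-c)) * k) x :=
      (Real.hasDerivAt_sin _).comp x (hθ x)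
    have := ((h1 x hx).mul hsin.hasDerivWithinAt).add
      (((h2 x hx).div_const k).mul hcos.hasDerivWithinAt)
    refine this.congr_deriv ?_
    field_simp
    ring
  have hc : c ∈ s := ⟨le_rfl, by linarith⟩
  have hc1 : (c+1) ∈ s := ⟨by linarith, le_rfl⟩
  have hconst : ∀ H : ℝ → ℝ, (∀ x ∈ s, HasDerivWithinAt H 0 s x) → H (c+1) = H c := by
    intro H hHd
    have := Convex.norm_image_sub_le_of_norm_hasDerivWithin_le
      (f' := fun _ => (0:ℝ)) (C := 0) hHd (fun x _ => le_of_eq norm_zero)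
      (convex_Icc c (c+1)) hc hc1
    rw [zero_mul] at this
    have h0 := norm_le_zero_iff.mp this
    linarith [sub_eq_zero.mp h0]
  have hFc := hconst F hFd
  have hGc := hconst G hGd
  have e0 : k * (c - c) = 0 := by ring
  have e1 : k * (c + 1 - c) = k := by ring
  have hFv : u (c+1) * Real.cos k - u' (c+1) / k * Real.sin k = u c := by
    have := hFc
    simp only [hF, e0, e1, Real.cos_zero, Real.sin_zero] at this
    linarith
  have hGv : u (c+1) * Real.sin k + u' (c+1) / k * Real.cos k = u' c / k := by
    have := hGc
    simp only [hG, e0, e1, Real.cos_zero, Real.sin_zero] at this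
    linarith
  have pyth := Real.sin_sq_add_cos_sq k
  constructor
  · linear_combination Real.cos k * hFv + Real.sin k * hGv - u (c+1) * pyth
  · have h3 : u' (c+1) / k = -(u c * Real.sin k) + u' c / k * Real.cos k := by
      linear_combination (-Real.sin k) * hFv + Real.cos k * hGv - (u' (c+1) / k) * pyth
    field_simp at h3
    linarith [h3]

/-- Let `k > 0` not be an integer multiple of `π`, and let `ω : ℤ → ℕ` with `ω_n ≥ 1`.
Suppose for each `n ∈ ℤ` and `1 ≤ j ≤ ω_n` there is a twice differentiable function
`u_{n,j}` on `[n, n+1]` (with derivative `u'_{n,j}` and second derivative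
`−k²·u_{n,j}`), that `u_{n,j}(n) = a(n)` and `u_{n,j}(n+1) = a(n+1)` (continuity at
the vertices), and that Kirchhoff's condition
`Σ_{j=1}^{ω_n} u'_{n,j}(n) = Σ_{j=1}^{ω_{n−1}} u'_{n−1,j}(n)` holds at every vertex.
Then `ω_n·a(n+1) + ω_{n−1}·a(n−1) − (ω_n + ω_{n−1})·cos(k)·a(n) = 0` for all `n`. -/
theorem statement1 (k : ℝ) (hk : 0 < k) (hkπ : ∀ m : ℤ, k ≠ m * π)
    (ω : ℤ → ℕ) (hω : ∀ n, 1 ≤ ω n)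
    (u u' : ℤ → ℕ → ℝ → ℝ) (a : ℤ → ℝ)
    (hu : ∀ (n : ℤ) (j : ℕ), 1 ≤ j → j ≤ ω n →
      ∀ x ∈ Icc (n : ℝ) ((n : ℝ) + 1),
        HasDerivWithinAt (u n j) (u' n j x) (Icc (n : ℝ) ((n : ℝ) + 1)) x)
    (hu'' : ∀ (n : ℤ) (j : ℕ), 1 ≤ j → j ≤ ω n →
      ∀ x ∈ Icc (n : ℝ) ((n : ℝ) + 1),
        HasDerivWithinAt (u' n j) (-(k ^ 2) * u n j x) (Icc (n : ℝ) ((n : ℝ) + 1)) x)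
    (hvert : ∀ (n : ℤ) (j : ℕ), 1 ≤ j → j ≤ ω n →
      u n j (n : ℝ) = a n ∧ u n j ((n : ℝ) + 1) = a (n + 1))
    (hKirchhoff : ∀ n : ℤ,
      ∑ j ∈ Finset.Icc 1 (ω n), u' n j (n : ℝ) =
      ∑ j ∈ Finset.Icc 1 (ω (n - 1)), u' (n - 1) j (n : ℝ)) :
    ∀ n : ℤ,
      (ω n : ℝ) * a (n + 1) + (ω (n - 1) : ℝ) * a (n - 1)
        - ((ω n : ℝ) + (ω (n - 1) : ℝ)) * Real.cos k * a n = 0 := by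
  have hk0 : k ≠ 0 := ne_of_gt hk
  have hsin : Real.sin k ≠ 0 := by
    intro h
    rcases Real.sin_eq_zero_iff.mp h with ⟨m, hm⟩
    exact hkπ m hm.symm
  intro n
  have pyth := Real.sin_sq_add_cos_sq k
  -- edge n: value of u' n j at n
  have key1 : ∀ j : ℕ, 1 ≤ j → j ≤ ω n →
      u' n j (n : ℝ) = k * (a (n+1) - a n * Real.cos k) / Real.sin k := by
    intro j h1j hj
    obtain ⟨e1, _⟩ := edge_sol k hk0 (n : ℝ) (u n j) (u' n j) (hu n j h1j hj) (hu'' n j h1j hj)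
    obtain ⟨v1, v2⟩ := hvert n j h1j hj
    rw [v1, v2] at e1
    have e1' : u' n j (n : ℝ) / k * Real.sin k = a (n+1) - a n * Real.cos k := by linarith
    field_simp at e1'
    rw [eq_div_iff hsin]
    linear_combination e1'
  -- edge n-1: value of u' (n-1) j at n
  have key2 : ∀ j : ℕ, 1 ≤ j → j ≤ ω (n-1) →
      u' (n-1) j (n : ℝ) = k * (a n * Real.cos k - a (n-1)) / Real.sin k := by
    intro j h1j hj
    obtain ⟨e1, e2⟩ := edge_sol k hk0 ((n-1 : ℤ) : ℝ) (u (n-1) j) (u' (n-1) j)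
      (hu (n-1) j h1j hj) (hu'' (n-1) j h1j hj)
    obtain ⟨v1, v2⟩ := hvert (n-1) j h1j hj
    have hcast : ((n-1 : ℤ) : ℝ) + 1 = (n : ℝ) := by push_cast; ring
    have hidx : (n - 1 + 1 : ℤ) = n := by ring
    rw [v1, v2, hidx] at e1
    rw [hcast] at e2
    rw [v1] at e2
    have e1' : u' (n-1) j ((n-1 : ℤ) : ℝ) / k * Real.sin k = a n - a (n-1) * Real.cos k := by
      linarith
    field_simp at e1'
    rw [e2, eq_div_iff hsin]
    push_cast at e1' ⊢
    linear_combination Real.cos k * e1' - k * a (n-1) * pyth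
  have hs1 : ∑ j ∈ Finset.Icc 1 (ω n), u' n j (n : ℝ)
      = (ω n : ℝ) * (k * (a (n+1) - a n * Real.cos k) / Real.sin k) := by
    rw [Finset.sum_congr rfl (fun j hj => key1 j (Finset.mem_Icc.mp hj).1 (Finset.mem_Icc.mp hj).2),
      Finset.sum_const, Nat.card_Icc]
    simp [nsmul_eq_mul]
  have hs2 : ∑ j ∈ Finset.Icc 1 (ω (n-1)), u' (n-1) j (n : ℝ)
      = (ω (n-1) : ℝ) * (k * (a n * Real.cos k - a (n-1)) / Real.sin k) := by
    rw [Finset.sum_congr rfl (fun j hj => key2 j (Finset.mem_Icc.mp hj).1 (Finset.mem_Icc.mp hj).2),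
      Finset.sum_const, Nat.card_Icc]
    simp [nsmul_eq_mul]
  have hK := hKirchhoff n
  rw [hs1, hs2] at hK
  field_simp at hK
  -- hK : ω n * (k * (a (n+1) - a n * cos k)) = ω (n-1) * (k * (a n * cos k - a (n-1))) (roughly)
  have hK' : (ω n : ℝ) * (a (n+1) - a n * Real.cos k)
      = (ω (n-1) : ℝ) * (a n * Real.cos k - a (n-1)) := by
    apply mul_left_cancel₀ hk0
    linear_combination k * hK
  linear_combination hK'
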